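/- Let γ be a 2n×2n real symmetric positive definite matrix with γ ≥ iσ_{2n}. Then the number of symplectic eigenvalues of γ equal to 1 (counted with multiplicity) is n - rank(γ - σ_{2n} γ^{-1} σ_{2n}^T)/2. -/

import Mathlib

open Matrix Complex ComplexOrder Polynomial

/-- The standard symplectic form `[[0, I_n], [-I_n, 0]]` on `n` modes. -/
def sympForm (n : ℕ) : Matrix (Fin n ⊕ Fin n) (Fin n ⊕ Fin n) ℝ :=
  Matrix.fromBlocks 0 1 (-1) 0

section AuxLemmas

variable {m K : Type*} [Fintype m] [DecidableEq m] [Field K]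

private lemma aux_map_mul (P Q : Matrix m m K) :
    (P * Q).map (C : K → K[X]) = P.map C * Q.map C := by
  ext i j; simp [Matrix.map_apply, Matrix.mul_apply]

private lemma aux_charpoly_conj (P N : Matrix m m K) (hP : IsUnit P.det) :
    (P * N * P⁻¹).charpoly = N.charpoly := by
  have h2 : P.map (C : K → K[X]) * P⁻¹.map C = 1 := by
    rw [← aux_map_mul, Matrix.mul_nonsing_inv _ hP]
    ext i j
    by_cases h : i = j <;> simp [Matrix.map_apply, Matrix.one_apply, h]
  have hsc : ∀ Q : Matrix m m K, Commute (Matrix.scalar m (X : K[X])) (Q.map C) := fun Q =>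
    Matrix.scalar_commute _ (fun r => Commute.all _ _) _
  have key : charmatrix (P * N * P⁻¹) = P.map C * charmatrix N * P⁻¹.map C := by
    unfold charmatrix
    simp only [RingHom.mapMatrix_apply, RingHom.coe_coe]
    rw [mul_sub, sub_mul]
    congr 1
    · rw [← (hsc P).eq, mul_assoc, h2, mul_one]
    · rw [← aux_map_mul, ← aux_map_mul]
  rw [Matrix.charpoly, Matrix.charpoly, key, Matrix.det_mul, Matrix.det_mul]
  rw [mul_right_comm, ← Matrix.det_mul, h2, Matrix.det_one, one_mul]

private lemma aux_charpoly_diagonal (d : m → K) :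
    (Matrix.diagonal d).charpoly = ∏ i, (X - C (d i)) := by
  have h : charmatrix (Matrix.diagonal d) = Matrix.diagonal (fun i => X - C (d i)) := by
    ext i j
    by_cases h : i = j
    · subst h; simp
    · simp [charmatrix_apply_ne _ _ _ h, Matrix.diagonal_apply_ne _ h]
  rw [Matrix.charpoly, h, Matrix.det_diagonal]

private lemma aux_rootMultiplicity [DecidableEq K] (f : m → K) (a : K) :
    (∏ i, (X - C (f i))).rootMultiplicity a = (Finset.univ.filter fun i => f i = a).card := by
  rw [← Polynomial.count_roots]
  have h1 : (∏ i, (X - C (f i))) = ((Finset.univ.val.map f).map fun b => X - C b).prod := by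
    rw [Multiset.map_map]; rfl
  rw [h1, Polynomial.roots_multiset_prod_X_sub_C, Multiset.count_map]
  rw [Multiset.filter_congr (fun x _ => (eq_comm : (a = f x) ↔ _))]
  rfl

private lemma symp_t (n : ℕ) : (sympForm n)ᵀ = -(sympForm n) := by
  simp only [sympForm, Matrix.fromBlocks_transpose, Matrix.fromBlocks_neg,
    transpose_zero, transpose_one, transpose_neg, neg_zero, neg_neg]

private lemma symp_sq (n : ℕ) : sympForm n * sympForm n = -1 := by
  have h : (-1 : Matrix (Fin n ⊕ Fin n) (Fin n ⊕ Fin n) ℝ) = Matrix.fromBlocks (-1) 0 0 (-1) := by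
    rw [← Matrix.fromBlocks_one, Matrix.fromBlocks_neg]
    simp
  rw [h]
  simp [sympForm, Matrix.fromBlocks_multiply]

end AuxLemmas

theorem card_unit_symplectic_eigenvalues (n : ℕ)
    (γ : Matrix (Fin n ⊕ Fin n) (Fin n ⊕ Fin n) ℝ)
    (hγ : γ.PosDef)
    (h : ((γ.map Complex.ofReal) - Complex.I • ((sympForm n).map Complex.ofReal)).PosSemidef) :
    (Matrix.charpoly (-(sympForm n * γ * sympForm n * γ))).rootMultiplicity 1 =
      2 * n - (γ - sympForm n * γ⁻¹ * (sympForm n)ᵀ).rank := by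
  classical
  set σ := sympForm n with hσdef
  have hσσ : σ * σ = -1 := symp_sq n
  have hσt : σᵀ = -σ := symp_t n
  have hσdet : IsUnit σ.det := by
    refine IsUnit.of_mul_eq_one σ.det ?_
    rw [← Matrix.det_mul, hσσ]
    simp [Matrix.det_neg, Fintype.card_sum, pow_add, ← mul_pow]
  have hγdet : IsUnit γ.det := hγ.det_pos.ne'.isUnit
  have hγinv : γ⁻¹ * γ = 1 := Matrix.nonsing_inv_mul _ hγdet
  -- square root of γ
  open scoped MatrixOrder in
  set s := CFC.sqrt γ with hsdef
  open scoped MatrixOrder in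
  have hss : s * s = γ := CFC.sqrt_mul_sqrt_self γ hγ.posSemidef.nonneg
  open scoped MatrixOrder in
  have hsH : s.IsHermitian := (CFC.sqrt_nonneg γ).posSemidef.1
  have hsdet : IsUnit s.det := by
    have : s.det * s.det = γ.det := by rw [← Matrix.det_mul, hss]
    exact isUnit_iff_ne_zero.mpr fun h0 => hγ.det_pos.ne' (by rw [← this, h0, mul_zero])
  have hsinv : s * s⁻¹ = 1 := Matrix.mul_nonsing_inv _ hsdet
  -- the matrices
  set A : Matrix (Fin n ⊕ Fin n) (Fin n ⊕ Fin n) ℝ := -(σ * γ * σ) with hAdef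
  set M : Matrix (Fin n ⊕ Fin n) (Fin n ⊕ Fin n) ℝ := A * γ with hMdef
  have hMeq : -(σ * γ * σ * γ) = M := by rw [hMdef, hAdef]; noncomm_ring
  set N : Matrix (Fin n ⊕ Fin n) (Fin n ⊕ Fin n) ℝ := s * A * s with hNdef
  have hγs : γ * s⁻¹ = s := by
    rw [← hss, mul_assoc, hsinv, mul_one]
  have e1 : s * M * s⁻¹ = N := by
    rw [hMdef, hNdef, ← mul_assoc s A γ, mul_assoc (s * A) γ s⁻¹, hγs]
  -- charpoly of M equals charpoly of N
  have hcp : M.charpoly = N.charpoly := by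
    rw [← e1, aux_charpoly_conj _ _ hsdet]
  -- N is hermitian
  have hAH : A.IsHermitian := by
    rw [Matrix.IsHermitian, hAdef, conjTranspose_neg, conjTranspose_mul, conjTranspose_mul]
    rw [hγ.1, show σᴴ = -σ from by rw [Matrix.conjTranspose_eq_transpose_of_trivial, hσt]]
    noncomm_ring
  have hNH : N.IsHermitian := by
    rw [Matrix.IsHermitian, hNdef, conjTranspose_mul, conjTranspose_mul, hsH, hAH]
    noncomm_ring
  -- spectral data
  set lam := hNH.eigenvalues with hlamdef
  set U : Matrix (Fin n ⊕ Fin n) (Fin n ⊕ Fin n) ℝ :=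
    (hNH.eigenvectorUnitary : Matrix (Fin n ⊕ Fin n) (Fin n ⊕ Fin n) ℝ) with hUdef
  have hUstar : U * star U = 1 := (Matrix.mem_unitaryGroup_iff).mp hNH.eigenvectorUnitary.2
  have hUinv : U⁻¹ = star U := Matrix.inv_eq_right_inv hUstar
  have hUdet : IsUnit U.det := by
    refine IsUnit.of_mul_eq_one (star U).det ?_
    rw [← Matrix.det_mul, hUstar, Matrix.det_one]
  have hsp : N = U * Matrix.diagonal lam * star U := by
    convert hNH.spectral_theorem using 2
    simp [Unitary.conjStarAlgAut_apply, U, lam, Function.comp_def]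
  -- charpoly of N
  have hcpN : N.charpoly = ∏ i, (X - C (lam i)) := by
    rw [hsp, ← hUinv, aux_charpoly_conj _ _ hUdet, aux_charpoly_diagonal]
  -- root multiplicity
  have hmult : (Matrix.charpoly (-(σ * γ * σ * γ))).rootMultiplicity 1 =
      (Finset.univ.filter fun i => lam i = 1).card := by
    rw [hMeq, hcp, hcpN, aux_rootMultiplicity]
  -- rank computations
  set B : Matrix (Fin n ⊕ Fin n) (Fin n ⊕ Fin n) ℝ := γ - σ * γ⁻¹ * σᵀ with hBdef
  have e2 : (-σ) * (B * (σ * γ)) = M - 1 := by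
    rw [hBdef, hσt, hMdef, hAdef]
    have hσσ' : ∀ Z : Matrix (Fin n ⊕ Fin n) (Fin n ⊕ Fin n) ℝ, σ * (σ * Z) = -Z := fun Z => by
      rw [← mul_assoc, hσσ, neg_one_mul]
    have expand : (-σ) * ((γ - σ * γ⁻¹ * -σ) * (σ * γ)) =
        -(σ * (γ * (σ * γ))) - σ * (σ * (γ⁻¹ * (σ * (σ * γ)))) := by noncomm_ring
    rw [expand, hσσ' (γ⁻¹ * (σ * (σ * γ))), hσσ' γ, mul_neg, hγinv]
    noncomm_ring
  have hσγdet : IsUnit (σ * γ).det := by rw [Matrix.det_mul]; exact hσdet.mul hγdet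
  have hnσdet : IsUnit (-σ).det := by
    refine IsUnit.of_mul_eq_one (-σ).det ?_
    rw [← Matrix.det_mul, neg_mul_neg, hσσ]
    simp [Matrix.det_neg, Fintype.card_sum, pow_add, ← mul_pow]
  have hrank1 : (M - 1).rank = B.rank := by
    rw [← e2, Matrix.rank_mul_eq_right_of_isUnit_det _ _ hnσdet,
      Matrix.rank_mul_eq_left_of_isUnit_det _ _ hσγdet]
  have e3 : s * (M - 1) * s⁻¹ = N - 1 := by
    rw [mul_sub, sub_mul, mul_one, e1, hsinv]
  have hrank2 : (N - 1).rank = (M - 1).rank := by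
    rw [← e3, Matrix.rank_mul_eq_left_of_isUnit_det _ _ (Matrix.isUnit_nonsing_inv_det _ hsdet),
      Matrix.rank_mul_eq_right_of_isUnit_det _ _ hsdet]
  have e4 : U * (Matrix.diagonal (fun i => lam i - 1)) * star U = N - 1 := by
    rw [show Matrix.diagonal (fun i => lam i - 1) = Matrix.diagonal lam - 1 from by
      rw [← Matrix.diagonal_one, Matrix.diagonal_sub]]
    rw [mul_sub, sub_mul, mul_one, hUstar, ← hsp]
  have hrank3 : (N - 1).rank = Fintype.card {i // lam i ≠ 1} := by
    rw [← e4, ← hUinv, Matrix.rank_mul_eq_left_of_isUnit_det _ _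
        (Matrix.isUnit_nonsing_inv_det _ hUdet),
      Matrix.rank_mul_eq_right_of_isUnit_det _ _ hUdet, Matrix.rank_diagonal]
    exact Fintype.card_congr (Equiv.subtypeEquivRight (fun i => by rw [sub_ne_zero]))
  -- counting
  have hBrank : B.rank = Fintype.card {i // lam i ≠ 1} := by rw [← hrank3, hrank2, hrank1]
  have hcount : (Finset.univ.filter fun i => lam i = 1).card
      + Fintype.card {i // lam i ≠ 1} = 2 * n := by
    rw [Fintype.card_subtype]
    have h5 := Finset.card_filter_add_card_filter_not
      (s := (Finset.univ : Finset (Fin n ⊕ Fin n))) (p := fun i => lam i = 1)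
    simp only [ne_eq, Finset.card_univ, Fintype.card_sum, Fintype.card_fin] at h5 ⊢
    omega
  rw [hmult, hBrank]
  omega
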